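/- If p is a real-rooted polynomial of degree n with distinct consecutive roots z_j < z_{j+1}, then every root z' of p' lying in the open interval (z_j, z_{j+1}) satisfies z_j + (z_{j+1} - z_j)/n ≤ z' ≤ z_j + (1 - 1/n)(z_{j+1} - z_j). -/

import Mathlib

open Polynomial

/-- Auxiliary lemma: if the sum of `(z' - r)⁻¹` over a multiset `R` of size `n` vanishes,
`zj ∈ R`, every element of `R` lies outside the open interval `(zj, zj1)`, and
`zj < z' < zj1`, then `zj1 - zj ≤ n * (z' - zj)`. -/
lemma aux_sum_bound (n : ℕ) (hn : 2 ≤ n) (R : Multiset ℝ) (hcard : Multiset.card R = n)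
    (zj zj1 z' : ℝ) (hzjR : zj ∈ R)
    (hside : ∀ r ∈ R, r ≤ zj ∨ zj1 ≤ r)
    (h1 : zj < z') (h2 : z' < zj1)
    (hsum : (R.map fun r => (z' - r)⁻¹).sum = 0) :
    zj1 - zj ≤ n * (z' - zj) := by
  have hu : 0 < z' - zj := by linarith
  have hv : 0 < zj1 - z' := by linarith
  have hsplit : (z' - zj)⁻¹ + ((R.erase zj).map fun r => (z' - r)⁻¹).sum = 0 := by
    rw [Multiset.sum_map_erase (f := fun r => (z' - r)⁻¹) hzjR, hsum]
  have hlb : ∀ x ∈ (R.erase zj).map fun r => (z' - r)⁻¹, (z' - zj1)⁻¹ ≤ x := by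
    intro x hx
    obtain ⟨r, hr, rfl⟩ := Multiset.mem_map.mp hx
    have hbneg : z' - zj1 < 0 := by linarith
    rcases hside r (Multiset.mem_of_mem_erase hr) with h | h
    · have hpos : (0:ℝ) < (z' - r)⁻¹ := inv_pos.mpr (by linarith)
      have hneg : (z' - zj1)⁻¹ < 0 := inv_lt_zero.mpr hbneg
      linarith
    · have haneg : z' - r < 0 := by linarith
      exact (inv_le_inv_of_neg hbneg haneg).mpr (by linarith)
  have hsumge := Multiset.card_nsmul_le_sum hlb
  have hcardE : Multiset.card ((R.erase zj).map fun r => (z' - r)⁻¹) = n - 1 := by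
    rw [Multiset.card_map, Multiset.card_erase_of_mem hzjR, hcard]
    exact Nat.pred_eq_sub_one
  rw [hcardE, nsmul_eq_mul] at hsumge
  have hcast : ((n - 1 : ℕ) : ℝ) = (n : ℝ) - 1 := by
    have : 1 ≤ n := by omega
    push_cast [this]; ring
  rw [hcast] at hsumge
  have key : (z' - zj)⁻¹ ≤ ((n:ℝ) - 1) * (zj1 - z')⁻¹ := by
    have h' : (z' - zj1)⁻¹ = -(zj1 - z')⁻¹ := by
      rw [show z' - zj1 = -(zj1 - z') by ring, inv_neg]
    rw [h'] at hsumge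
    linarith
  have hmul := mul_le_mul_of_nonneg_right key (le_of_lt (mul_pos hu hv))
  have e1 : (z' - zj)⁻¹ * ((z' - zj) * (zj1 - z')) = zj1 - z' := by
    field_simp
  have e2 : ((n:ℝ) - 1) * (zj1 - z')⁻¹ * ((z' - zj) * (zj1 - z'))
      = ((n:ℝ) - 1) * (z' - zj) := by
    field_simp
  rw [e1, e2] at hmul
  nlinarith [hmul, hu]

/-- **Quantitative interlacing.** If `p` is a real-rooted polynomial of degree `n ≥ 2`
with consecutive distinct roots `zj < zj1`, then every root `z'` of `p'` in the open
interval `(zj, zj1)` satisfies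
`zj + (zj1 - zj)/n ≤ z' ≤ zj + (1 - 1/n) * (zj1 - zj)`. -/
theorem quantitative_interlacing (n : ℕ) (hn : 2 ≤ n) (p : Polynomial ℝ)
    (hdeg : p.natDegree = n) (hsplit : p.Splits)
    (zj zj1 : ℝ) (hlt : zj < zj1)
    (hrj : p.IsRoot zj) (hrj1 : p.IsRoot zj1)
    (hconsec : ∀ x : ℝ, zj < x → x < zj1 → ¬ p.IsRoot x)
    (z' : ℝ) (hz'1 : zj < z') (hz'2 : z' < zj1) (hz' : p.derivative.IsRoot z') :
    zj + (zj1 - zj) / n ≤ z' ∧ z' ≤ zj + (1 - 1 / n) * (zj1 - zj) := by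
  have hp0 : p ≠ 0 := by
    intro h
    rw [h, natDegree_zero] at hdeg
    omega
  have ha0 : p.leadingCoeff ≠ 0 := leadingCoeff_ne_zero.mpr hp0
  set R := p.roots with hR
  have hcard : Multiset.card R = n := by
    rw [hR, splits_iff_card_roots.mp hsplit, hdeg]
  have hzjR : zj ∈ R := (mem_roots hp0).mpr hrj
  have hzj1R : zj1 ∈ R := (mem_roots hp0).mpr hrj1
  have hside : ∀ r ∈ R, r ≤ zj ∨ zj1 ≤ r := by
    intro r hr
    have hroot : p.IsRoot r := isRoot_of_mem_roots hr
    by_contra hc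
    push_neg at hc
    exact hconsec r hc.1 hc.2 hroot
  have hne : ∀ r ∈ R, z' - r ≠ 0 := by
    intro r hr
    rcases hside r hr with h | h <;> intro h0 <;> nlinarith [sub_eq_zero.mp h0]
  -- the key identity: sum of inverses vanishes
  have hpe : p = C p.leadingCoeff * (R.map fun r => X - C r).prod :=
    hsplit.eq_prod_roots
  have hP : (R.map fun r => z' - r).prod ≠ 0 := by
    apply Multiset.prod_ne_zero
    intro h0
    obtain ⟨r, hr, hzr⟩ := Multiset.mem_map.mp h0
    exact hne r hr hzr
  have hsum0 : (R.map fun r => (z' - r)⁻¹).sum = 0 := by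
    have hev : eval z' (derivative p) = 0 := hz'
    rw [hpe, derivative_mul, derivative_C, zero_mul, zero_add, derivative_prod] at hev
    rw [eval_mul, eval_C] at hev
    have h := (mul_eq_zero.mp hev).resolve_left ha0
    have hsum_eval := map_multiset_sum (evalRingHom z')
      (Multiset.map (fun i =>
        ((R.erase i).map fun r => X - C r).prod * derivative (X - C i)) R)
    rw [Multiset.map_map] at hsum_eval
    simp only [coe_evalRingHom, Function.comp] at hsum_eval
    rw [h] at hsum_eval
    -- hsum_eval : 0 = sum of evals
    have hev2 : (R.map fun i =>
        eval z' (((R.erase i).map fun r => X - C r).prod * derivative (X - C i))).sum = 0 :=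
      hsum_eval.symm
    have heach : ∀ i ∈ R,
        eval z' (((R.erase i).map fun r => X - C r).prod * derivative (X - C i))
          = (z' - i)⁻¹ * (R.map fun r => z' - r).prod := by
      intro i hi
      rw [eval_mul]
      have hd : derivative (X - C i) = 1 := by
        rw [derivative_sub, derivative_X, derivative_C, sub_zero]
      rw [hd, eval_one, mul_one]
      have hprod : eval z' (((R.erase i).map fun r => X - C r).prod)
          = ((R.erase i).map fun r => z' - r).prod := by
        rw [eval_multiset_prod, Multiset.map_map]
        congr 1
        ext r
        simp
      rw [hprod]
      have hfact : (z' - i) * ((R.erase i).map fun r => z' - r).prod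
          = (R.map fun r => z' - r).prod :=
        Multiset.prod_map_erase (f := fun r => z' - r) hi
      field_simp [hne i hi]
      linarith [hfact]
    rw [Multiset.map_congr rfl heach] at hev2
    have hfac : (R.map fun i => (z' - i)⁻¹ * (R.map fun r => z' - r).prod).sum
        = (R.map fun i => (z' - i)⁻¹).sum * (R.map fun r => z' - r).prod := by
      rw [← Multiset.sum_map_mul_right]
    rw [hfac] at hev2
    exact (mul_eq_zero.mp hev2).resolve_right hP
  have hn0 : (0:ℝ) < n := by positivity
  constructor
  · have hb := aux_sum_bound n hn R hcard zj zj1 z' hzjR hside hz'1 hz'2 hsum0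
    have hdiv : (zj1 - zj) / n ≤ z' - zj :=
      (div_le_iff₀ hn0).mpr (by linarith [mul_comm (n:ℝ) (z' - zj)])
    linarith
  · -- apply the auxiliary lemma to the negated multiset
    have hsum0' : ((R.map fun r => -r).map fun s => (-z' - s)⁻¹).sum = 0 := by
      rw [Multiset.map_map]
      have hfun : ∀ r ∈ R, ((fun s => (-z' - s)⁻¹) ∘ fun r => -r) r = -((z' - r)⁻¹) := by
        intro r _
        simp only [Function.comp_apply]
        rw [show -z' - -r = -(z' - r) by ring, inv_neg]
      rw [Multiset.map_congr rfl hfun, Multiset.sum_map_neg, hsum0, neg_zero]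
    have hb := aux_sum_bound n hn (R.map fun r => -r) (by rw [Multiset.card_map, hcard])
      (-zj1) (-zj) (-z') (Multiset.mem_map_of_mem _ hzj1R)
      (by
        intro s hs
        obtain ⟨r, hr, rfl⟩ := Multiset.mem_map.mp hs
        rcases hside r hr with h | h
        · right; linarith
        · left; linarith)
      (by linarith) (by linarith) hsum0'
    -- hb : -zj - -zj1 ≤ n * (-z' - -zj1), i.e. zj1 - zj ≤ n * (zj1 - z')
    have hdiv : (zj1 - zj) / n ≤ zj1 - z' :=
      (div_le_iff₀ hn0).mpr (by nlinarith [hb])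
    have hone : (1 - 1 / (n:ℝ)) * (zj1 - zj) = (zj1 - zj) - (zj1 - zj) / n := by
      ring
    rw [hone]
    linarith
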